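/- Let T be a finite tree with diameter at least 3, and let h ≥ p ≥ 1 be integers. Then T admits an elegant L(h,p,p)-labelling with span h + 2(Δ(T) − 1)·p; consequently λ_{h,p,p}(T) ≤ λ*_{h,p,p}(T) ≤ h + 2(Δ(T) − 1)·p. -/

import Mathlib

open SimpleGraph

/-- An `L(h,p,p)`-labelling of `G` with span `ℓ`: labels in `{0,…,ℓ}`, labels of vertices at
distance 1 differ by at least `h`, labels of vertices at distance 2 or 3 differ by at least `p`. -/
def IsLLabelling {V : Type} (G : SimpleGraph V) (h p ℓ : ℕ) (f : V → ℕ) : Prop :=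
  (∀ v, f v ≤ ℓ) ∧
  (∀ u v, G.dist u v = 1 → (h : ℤ) ≤ |(f u : ℤ) - (f v : ℤ)|) ∧
  (∀ u v, G.dist u v = 2 ∨ G.dist u v = 3 → (p : ℤ) ≤ |(f u : ℤ) - (f v : ℤ)|)

/-- `λ_{h,p,p}(G)`: the minimum span of an `L(h,p,p)`-labelling of `G`. -/
noncomputable def lambdaNum {V : Type} (G : SimpleGraph V) (h p : ℕ) : ℕ :=
  sInf {ℓ : ℕ | ∃ f : V → ℕ, IsLLabelling G h p ℓ f}

/-- A circular interval modulo `n`: a set of residues of the form `{a, a+1, …, a+s}` mod `n`. -/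
def IsCircInterval (n : ℕ) (I : Set (ZMod n)) : Prop :=
  ∃ (a : ZMod n) (s : ℕ), I = {x : ZMod n | ∃ i : ℕ, i ≤ s ∧ x = a + (i : ZMod n)}

/-- An elegant `L(h,p,p)`-labelling: additionally each vertex `u` has a circular interval `I u`
modulo `ℓ+1` containing the labels of all neighbours of `u`, with `I u ∩ I v = ∅` for edges `uv`. -/
def IsElegantLLabelling {V : Type} (G : SimpleGraph V) (h p ℓ : ℕ) (f : V → ℕ) : Prop :=
  IsLLabelling G h p ℓ f ∧
  ∃ I : V → Set (ZMod (ℓ + 1)),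
    (∀ u, IsCircInterval (ℓ + 1) (I u)) ∧
    (∀ u w, G.Adj u w → ((f w : ZMod (ℓ + 1)) ∈ I u)) ∧
    (∀ u v, G.Adj u v → I u ∩ I v = ∅)

/-- `λ*_{h,p,p}(G)`: the minimum span of an elegant `L(h,p,p)`-labelling of `G`. -/
noncomputable def lambdaStar {V : Type} (G : SimpleGraph V) (h p : ℕ) : ℕ :=
  sInf {ℓ : ℕ | ∃ f : V → ℕ, IsElegantLLabelling G h p ℓ f}

/-- The `ℓ`-cyclic distance between labels `a` and `b`. -/
def cycDist (ℓ a b : ℕ) : ℤ :=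
  min |(a : ℤ) - (b : ℤ)| ((ℓ : ℤ) - |(a : ℤ) - (b : ℤ)|)

/-- A `C(h,p,p)`-labelling of `G` with span `ℓ`: labels in `{0,…,ℓ-1}`, and the `ℓ`-cyclic distance
between labels of vertices at distance 1 (resp. 2 or 3) is at least `h` (resp. `p`). -/
def IsCLabelling {V : Type} (G : SimpleGraph V) (h p ℓ : ℕ) (f : V → ℕ) : Prop :=
  (∀ v, f v < ℓ) ∧
  (∀ u v, G.dist u v = 1 → (h : ℤ) ≤ cycDist ℓ (f u) (f v)) ∧
  (∀ u v, G.dist u v = 2 ∨ G.dist u v = 3 → (p : ℤ) ≤ cycDist ℓ (f u) (f v))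

/-- `σ_{h,p,p}(G)`: the minimum positive `ℓ` such that `G` has a `C(h,p,p)`-labelling of span `ℓ`. -/
noncomputable def sigmaNum {V : Type} (G : SimpleGraph V) (h p : ℕ) : ℕ :=
  sInf {ℓ : ℕ | 0 < ℓ ∧ ∃ f : V → ℕ, IsCLabelling G h p ℓ f}

/-- An elegant `C(h,p,p)`-labelling: additionally each vertex `u` has a circular interval `I u`
modulo `ℓ` containing the labels of all neighbours of `u`, with `I u ∩ I v = ∅` for edges `uv`. -/
def IsElegantCLabelling {V : Type} (G : SimpleGraph V) (h p ℓ : ℕ) (f : V → ℕ) : Prop :=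
  IsCLabelling G h p ℓ f ∧
  ∃ I : V → Set (ZMod ℓ),
    (∀ u, IsCircInterval ℓ (I u)) ∧
    (∀ u w, G.Adj u w → ((f w : ZMod ℓ) ∈ I u)) ∧
    (∀ u v, G.Adj u v → I u ∩ I v = ∅)

/-- `σ*_{h,p,p}(G)`: the minimum positive `ℓ` such that `G` has an elegant `C(h,p,p)`-labelling
of span `ℓ`. -/
noncomputable def sigmaStar {V : Type} (G : SimpleGraph V) (h p : ℕ) : ℕ :=
  sInf {ℓ : ℕ | 0 < ℓ ∧ ∃ f : V → ℕ, IsElegantCLabelling G h p ℓ f}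

/-- `Δ₂(G) = max over edges uv of (deg u + deg v)`. -/
noncomputable def deltaTwo {V : Type} (G : SimpleGraph V) [Fintype V] [DecidableRel G.Adj] : ℕ :=
  sSup {d : ℕ | ∃ u v : V, G.Adj u v ∧ d = G.degree u + G.degree v}


namespace TreeLab

variable {V : Type} [DecidableEq V] (G : SimpleGraph V)

lemma isPath_concat {u v w : V} {p : G.Walk u v} (hp : p.IsPath) (hw : w ∉ p.support)
    (h : G.Adj v w) : (p.concat h).IsPath := by
  have : (p.concat h).reverse.IsPath := by
    rw [SimpleGraph.Walk.reverse_concat]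
    rw [SimpleGraph.Walk.cons_isPath_iff]
    refine ⟨hp.reverse, ?_⟩
    rw [SimpleGraph.Walk.support_reverse, List.mem_reverse]
    exact hw
  have h' := this.reverse
  rwa [SimpleGraph.Walk.reverse_reverse] at h'

/-- In a tree, every path has length equal to the distance of its endpoints. -/
lemma path_length (hT : G.IsTree) {u v : V} (p : G.Walk u v) (hp : p.IsPath) :
    p.length = G.dist u v := by
  obtain ⟨q, hq, hql⟩ := hT.isConnected.exists_path_of_dist u v
  have := hT.IsAcyclic.path_unique ⟨p, hp⟩ ⟨q, hq⟩
  rw [Subtype.ext_iff] at this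
  simp only at this
  rw [this, hql]

/-- splitting a path at a support vertex -/
lemma dist_split (hT : G.IsTree) {a b : V} (p : G.Walk a b) (hp : p.IsPath) {x : V}
    (hx : x ∈ p.support) : G.dist a x + G.dist x b = p.length := by
  have h1 := path_length G hT _ (hp.takeUntil hx)
  have h2 := path_length G hT _ (hp.dropUntil hx)
  have h3 := congrArg SimpleGraph.Walk.length (p.take_spec hx)
  rw [SimpleGraph.Walk.length_append] at h3
  omega

/-- adjacency changes depth by exactly one -/
lemma adj_depth (hT : G.IsTree) (r : V) {u v : V} (h : G.Adj u v) :
    G.dist r v = G.dist r u + 1 ∨ G.dist r u = G.dist r v + 1 := by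
  obtain ⟨p, hp, hpl⟩ := hT.isConnected.exists_path_of_dist r u
  by_cases hv : v ∈ p.support
  · right
    have hsplit := dist_split G hT p hp hv
    have hvu : G.dist v u = 1 := dist_eq_one_iff_adj.mpr h.symm
    have h4 := path_length G hT _ (hp.dropUntil hv)
    have hge : 1 ≤ (p.dropUntil v hv).length := by
      rw [h4, hvu]
    have : G.dist r u ≤ G.dist r v + G.dist v u := hT.isConnected.dist_triangle
    omega
  · left
    have hpath : (p.concat h).IsPath := isPath_concat G hp hv h
    have := path_length G hT _ hpath
    rw [SimpleGraph.Walk.length_concat] at this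
    omega

end TreeLab

namespace Inner

set_option linter.unusedSectionVars false

variable {V : Type} [DecidableEq V] (G : SimpleGraph V)

/-- parent existence: any non-root vertex has a neighbour closer to the root. -/
lemma exists_parent (hT : G.IsTree) (r : V) {v : V} (hv : v ≠ r) :
    ∃ w, G.Adj v w ∧ G.dist r w + 1 = G.dist r v := by
  have hd : 0 < G.dist r v := hT.isConnected.pos_dist_of_ne (Ne.symm hv)
  obtain ⟨p, hp, hpl⟩ := hT.isConnected.exists_path_of_dist r v
  set d := G.dist r v with hdd
  have hlt : d - 1 < p.length := by omega
  set x := p.getVert (d - 1) with hx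
  have hadj : G.Adj x v := by
    have := p.adj_getVert_succ hlt
    have he : d - 1 + 1 = p.length := by omega
    rw [he, SimpleGraph.Walk.getVert_length] at this
    exact this
  have hxs : x ∈ p.support := by
    rw [SimpleGraph.Walk.mem_support_iff_exists_getVert]
    exact ⟨d - 1, rfl, by omega⟩
  have hsplit := TreeLab.dist_split G hT p hp hxs
  have hxv : G.dist x v = 1 := SimpleGraph.dist_eq_one_iff_adj.mpr hadj
  exact ⟨x, hadj.symm, by omega⟩

/-- parent uniqueness -/
lemma parent_unique (hT : G.IsTree) (r : V) {v w w' : V} (h : G.Adj v w) (h' : G.Adj v w')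
    (hd : G.dist r w + 1 = G.dist r v) (hd' : G.dist r w' + 1 = G.dist r v) : w = w' := by
  obtain ⟨P, hP, hPl⟩ := hT.isConnected.exists_path_of_dist w r
  obtain ⟨P', hP', hPl'⟩ := hT.isConnected.exists_path_of_dist w' r
  have hvP : v ∉ P.support := by
    intro hv
    have := TreeLab.dist_split G hT P hP hv
    have h1 : G.dist v r = G.dist r v := SimpleGraph.dist_comm ..
    have h2 : G.dist w r = G.dist r w := SimpleGraph.dist_comm ..
    omega
  have hvP' : v ∉ P'.support := by
    intro hv
    have := TreeLab.dist_split G hT P' hP' hv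
    have h1 : G.dist v r = G.dist r v := SimpleGraph.dist_comm ..
    have h2 : G.dist w' r = G.dist r w' := SimpleGraph.dist_comm ..
    omega
  have hQ : (SimpleGraph.Walk.cons h P).IsPath := hP.cons hvP
  have hQ' : (SimpleGraph.Walk.cons h' P').IsPath := hP'.cons hvP'
  have := hT.IsAcyclic.path_unique ⟨_, hQ⟩ ⟨_, hQ'⟩
  rw [Subtype.ext_iff] at this
  simp only at this
  have h1 := congrArg (fun q : G.Walk v r => q.getVert 1) this
  simpa [SimpleGraph.Walk.getVert_cons_succ] using h1

end Inner

namespace Defs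

open Classical in
/-- chosen parent of `v` w.r.t. root `r` (junk value `v` at the root). -/
noncomputable def par {V : Type} (G : SimpleGraph V) (r v : V) : V :=
  if h : ∃ w, G.Adj v w ∧ G.dist r w + 1 = G.dist r v then h.choose else v

open Classical in
/-- children of `w`: neighbours one step further from the root. -/
noncomputable def children {V : Type} [Fintype V] (G : SimpleGraph V) (r w : V) : Finset V :=
  (G.neighborFinset w).filter (fun v => G.dist r v = G.dist r w + 1)

open Classical in
noncomputable def idx {V : Type} [Fintype V] (v : V) : ℕ := (Fintype.equivFin V v : ℕ)

open Classical in
/-- rank of `v` among the children of its parent. -/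
noncomputable def rnk {V : Type} [Fintype V] (G : SimpleGraph V) (r v : V) : ℕ :=
  ((children G r (par G r v)).filter (fun x => idx x < idx v)).card

def skipF (t k : ℕ) : ℕ := if k < t then k else k + 1

open Classical in
/-- colour function, by recursion on an upper bound for the depth. -/
noncomputable def cF {V : Type} [Fintype V] (G : SimpleGraph V) (r : V)
    (D : ℕ) : ℕ → V → ℕ
  | 0, _ => 0
  | n + 1, v =>
    if v = r then 0
    else skipF (if par G r v = r then D else cF G r D n (par G r (par G r v))) (rnk G r v)

open Classical in
noncomputable def cV {V : Type} [Fintype V] (G : SimpleGraph V) (r : V) (D : ℕ) (v : V) : ℕ :=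
  cF G r D (G.dist r v) v

end Defs

namespace Props

open Defs

set_option linter.unusedSectionVars false

variable {V : Type} [Fintype V] (G : SimpleGraph V) (r : V)

lemma par_spec (hT : G.IsTree) {v : V} (hv : v ≠ r) :
    G.Adj v (par G r v) ∧ G.dist r (par G r v) + 1 = G.dist r v := by
  classical
  have hex := Inner.exists_parent G hT r hv
  rw [par, dif_pos hex]
  exact hex.choose_spec

lemma par_eq (hT : G.IsTree) {v w : V} (h : G.Adj v w) (hd : G.dist r w + 1 = G.dist r v) :
    par G r v = w := by
  classical
  have hv : v ≠ r := by
    intro e; subst e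
    rw [SimpleGraph.dist_self] at hd
    omega
  obtain ⟨h1, h2⟩ := par_spec G r hT hv
  exact Inner.parent_unique G hT r h1 h h2 hd

lemma mem_children {v w : V} :
    v ∈ children G r w ↔ G.Adj w v ∧ G.dist r v = G.dist r w + 1 := by
  classical
  simp [children, SimpleGraph.mem_neighborFinset]

lemma mem_children_par (hT : G.IsTree) {v : V} (hv : v ≠ r) :
    v ∈ children G r (par G r v) := by
  obtain ⟨h1, h2⟩ := par_spec G r hT hv
  rw [mem_children]
  exact ⟨h1.symm, by omega⟩

lemma of_mem_children (hT : G.IsTree) {v w : V} (h : v ∈ children G r w) :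
    v ≠ r ∧ par G r v = w := by
  rw [mem_children] at h
  have hv : v ≠ r := by
    intro e; subst e
    rw [SimpleGraph.dist_self] at h
    omega
  exact ⟨hv, par_eq G r hT h.1.symm (by omega)⟩

lemma card_children_le [DecidableRel G.Adj] (w : V) :
    (children G r w).card ≤ G.degree w := by
  have hsub : children G r w ⊆ G.neighborFinset w := by
    intro x hx
    rw [SimpleGraph.mem_neighborFinset]
    exact ((mem_children G r).1 hx).1
  exact (Finset.card_le_card hsub).trans_eq rfl

lemma card_children_lt [DecidableRel G.Adj] (hT : G.IsTree) {w : V} (hw : w ≠ r) :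
    (children G r w).card + 1 ≤ G.degree w := by
  classical
  obtain ⟨h1, h2⟩ := par_spec G r hT hw
  have hnot : par G r w ∉ children G r w := by
    rw [mem_children]
    rintro ⟨-, hd⟩
    omega
  have hsub : insert (par G r w) (children G r w) ⊆ G.neighborFinset w := by
    intro x hx
    rw [Finset.mem_insert] at hx
    rw [SimpleGraph.mem_neighborFinset]
    rcases hx with rfl | hx
    · exact h1
    · exact ((mem_children G r).1 hx).1
  have := Finset.card_le_card hsub
  rw [Finset.card_insert_of_notMem hnot] at this
  exact this.trans_eq rfl

lemma idx_injective : Function.Injective (idx (V := V)) := by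
  intro a b hab
  classical
  exact (Fintype.equivFin V).injective (Fin.ext hab)

lemma rnk_lt_card (hT : G.IsTree) {v w : V} (hv : v ∈ children G r w) :
    rnk G r v + 1 ≤ (children G r w).card := by
  classical
  obtain ⟨hvr, hpar⟩ := of_mem_children G r hT hv
  rw [rnk, hpar]
  have hsub : (children G r w).filter (fun x => idx x < idx v) ⊆ (children G r w).erase v := by
    intro x hx
    rw [Finset.mem_filter] at hx
    rw [Finset.mem_erase]
    exact ⟨fun e => by subst e; omega, hx.1⟩
  have h1 := Finset.card_le_card hsub
  rw [Finset.card_erase_of_mem hv] at h1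
  have h2 : 1 ≤ (children G r w).card := Finset.card_pos.mpr ⟨v, hv⟩
  omega

lemma rnk_lt_rnk (hT : G.IsTree) {u v w : V} (hu : u ∈ children G r w)
    (hv : v ∈ children G r w) (hlt : idx u < idx v) : rnk G r u < rnk G r v := by
  classical
  obtain ⟨-, hpu⟩ := of_mem_children G r hT hu
  obtain ⟨-, hpv⟩ := of_mem_children G r hT hv
  rw [rnk, rnk, hpu, hpv]
  apply Finset.card_lt_card
  constructor
  · intro x hx
    rw [Finset.mem_filter] at hx ⊢
    exact ⟨hx.1, by omega⟩
  · intro hcon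
    have := hcon (Finset.mem_filter.mpr ⟨hu, hlt⟩)
    rw [Finset.mem_filter] at this
    omega

lemma rnk_ne (hT : G.IsTree) {u v w : V} (hu : u ∈ children G r w)
    (hv : v ∈ children G r w) (hne : u ≠ v) : rnk G r u ≠ rnk G r v := by
  have : idx u ≠ idx v := fun e => hne (idx_injective e)
  rcases lt_or_gt_of_ne this with hlt | hgt
  · exact Nat.ne_of_lt (rnk_lt_rnk G r hT hu hv hlt)
  · exact Nat.ne_of_gt (rnk_lt_rnk G r hT hv hu hgt)

lemma skipF_le (t k : ℕ) : skipF t k ≤ k + 1 := by unfold skipF; split_ifs <;> omega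

lemma skipF_ne (t k : ℕ) : skipF t k ≠ t := by unfold skipF; split_ifs <;> omega

lemma skipF_inj {t k k' : ℕ} (h : skipF t k = skipF t k') : k = k' := by
  unfold skipF at h; split_ifs at h <;> omega

lemma skipF_lt {t k : ℕ} (hk : k < t) : skipF t k < t := by unfold skipF; split_ifs <;> omega

lemma cF_root (D n : ℕ) : cF (V := V) G r D n r = 0 := by
  classical
  cases n <;> simp [cF]

lemma dist_eq_zero (hT : G.IsTree) {v : V} (h : G.dist r v = 0) : v = r := by
  by_contra hv
  have := hT.isConnected.pos_dist_of_ne (Ne.symm hv)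
  omega

lemma cF_stab (hT : G.IsTree) (D : ℕ) :
    ∀ n, ∀ m, ∀ v : V, G.dist r v ≤ n → G.dist r v ≤ m →
      cF G r D n v = cF G r D m v := by
  classical
  intro n
  induction n with
  | zero =>
    intro m v h1 _
    have : v = r := dist_eq_zero G r hT (by omega)
    subst this
    rw [cF_root, cF_root]
  | succ n ih =>
    intro m v h1 h2
    by_cases hv : v = r
    · subst hv; rw [cF_root, cF_root]
    · cases m with
      | zero =>
        exact absurd (dist_eq_zero G r hT (by omega)) hv
      | succ m =>
        simp only [cF, if_neg hv]
        congr 1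
        by_cases hp : par G r v = r
        · rw [if_pos hp, if_pos hp]
        · rw [if_neg hp, if_neg hp]
          obtain ⟨-, hd1⟩ := par_spec G r hT hv
          obtain ⟨-, hd2⟩ := par_spec G r hT hp
          exact ih m _ (by omega) (by omega)

open Classical in
lemma cV_eq (hT : G.IsTree) {v : V} (hv : v ≠ r) (D : ℕ) :
    cV G r D v = skipF (if par G r v = r then D else cV G r D (par G r (par G r v)))
      (rnk G r v) := by
  classical
  have hd : 0 < G.dist r v := hT.isConnected.pos_dist_of_ne (Ne.symm hv)
  obtain ⟨k, hk⟩ : ∃ k, G.dist r v = k + 1 := ⟨G.dist r v - 1, by omega⟩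
  rw [cV, hk]
  simp only [cF, if_neg hv]
  congr 1
  by_cases hp : par G r v = r
  · rw [if_pos hp, if_pos hp]
  · rw [if_neg hp, if_neg hp, cV]
    obtain ⟨-, hd1⟩ := par_spec G r hT hv
    obtain ⟨-, hd2⟩ := par_spec G r hT hp
    exact cF_stab G r hT D k _ _ (by omega) (by omega)

lemma cV_lt [DecidableRel G.Adj] (hT : G.IsTree) {Δ : ℕ} (hdeg : ∀ w, G.degree w ≤ Δ)
    (hΔ : 1 ≤ Δ) (v : V) : cV G r Δ v < Δ := by
  by_cases hv : v = r
  · subst hv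
    rw [cV, SimpleGraph.dist_self, cF_root]
    omega
  · rw [cV_eq G r hT hv]
    have hmem := mem_children_par G r hT hv
    have hrnk := rnk_lt_card G r hT hmem
    by_cases hp : par G r v = r
    · rw [if_pos hp]
      have hcard := card_children_le G r (par G r v)
      have := hdeg (par G r v)
      exact skipF_lt (by omega)
    · rw [if_neg hp]
      have hcard := card_children_lt G r hT hp
      have := hdeg (par G r v)
      have := skipF_le (cV G r Δ (par G r (par G r v))) (rnk G r v)
      omega

lemma cV_ne (hT : G.IsTree) {Δ : ℕ} {w u v : V} (hu : G.Adj w u) (hv : G.Adj w v)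
    (hne : u ≠ v) : cV G r Δ u ≠ cV G r Δ v := by
  classical
  have hu' := TreeLab.adj_depth G hT r hu
  have hv' := TreeLab.adj_depth G hT r hv
  rcases hu' with hu1 | hu2
  · rcases hv' with hv1 | hv2
    · -- both children of w
      have hum : u ∈ children G r w := (mem_children G r).mpr ⟨hu, hu1⟩
      have hvm : v ∈ children G r w := (mem_children G r).mpr ⟨hv, hv1⟩
      obtain ⟨hur, hpu⟩ := of_mem_children G r hT hum
      obtain ⟨hvr, hpv⟩ := of_mem_children G r hT hvm
      rw [cV_eq G r hT hur, cV_eq G r hT hvr, hpu, hpv]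
      intro hcon
      exact rnk_ne G r hT hum hvm hne (skipF_inj hcon)
    · -- v = par w
      have hpw : par G r w = v := par_eq G r hT hv (by omega)
      have hwr : w ≠ r := by
        intro e; subst e
        rw [SimpleGraph.dist_self] at hv2
        omega
      have hum : u ∈ children G r w := (mem_children G r).mpr ⟨hu, hu1⟩
      obtain ⟨hur, hpu⟩ := of_mem_children G r hT hum
      rw [cV_eq G r hT hur, hpu, if_neg hwr, hpw]
      exact skipF_ne _ _
  · rcases hv' with hv1 | hv2
    · -- u = par w
      have hpw : par G r w = u := par_eq G r hT hu (by omega)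
      have hwr : w ≠ r := by
        intro e; subst e
        rw [SimpleGraph.dist_self] at hu2
        omega
      have hvm : v ∈ children G r w := (mem_children G r).mpr ⟨hv, hv1⟩
      obtain ⟨hvr, hpv⟩ := of_mem_children G r hT hvm
      rw [cV_eq G r hT hvr, hpv, if_neg hwr, hpw]
      exact (skipF_ne _ _).symm
    · -- both parents: contradiction
      have h1 : par G r w = u := par_eq G r hT hu (by omega)
      have h2 : par G r w = v := par_eq G r hT hv (by omega)
      exact absurd (h1 ▸ h2) hne

lemma walk_parity (hT : G.IsTree) {u v : V} (W : G.Walk u v) :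
    (G.dist r u + G.dist r v + W.length) % 2 = 0 := by
  classical
  induction W with
  | nil => simp only [SimpleGraph.Walk.length_nil]; omega
  | cons h W ih =>
    have := TreeLab.adj_depth G hT r h
    rw [SimpleGraph.Walk.length_cons]
    omega

lemma dist_parity (hT : G.IsTree) (u v : V) :
    (G.dist r u + G.dist r v + G.dist u v) % 2 = 0 := by
  obtain ⟨W, -, hl⟩ := hT.isConnected.exists_path_of_dist u v
  have := walk_parity G r hT W
  omega

lemma common_mid (hT : G.IsTree) {u v : V} (hd : G.dist u v = 2) :
    ∃ w, G.Adj w u ∧ G.Adj w v := by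
  obtain ⟨p, -, hl⟩ := hT.isConnected.exists_path_of_dist u v
  rw [hd] at hl
  refine ⟨p.getVert 1, ?_, ?_⟩
  · have h0 := p.adj_getVert_succ (by omega : 0 < p.length)
    rw [SimpleGraph.Walk.getVert_zero] at h0
    exact h0.symm
  · have h1 := p.adj_getVert_succ (by omega : 1 < p.length)
    have he : 1 + 1 = p.length := by omega
    rw [he, SimpleGraph.Walk.getVert_length] at h1
    exact h1

end Props


set_option maxHeartbeats 1000000 in
theorem stmt1 {V : Type} [Fintype V] (G : SimpleGraph V) [DecidableRel G.Adj]
    (hT : G.IsTree) (hdiam : ∃ u v : V, 3 ≤ G.dist u v)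
    (h p : ℕ) (hp : 1 ≤ p) (hph : p ≤ h) :
    (∃ f : V → ℕ, IsElegantLLabelling G h p (h + 2 * (G.maxDegree - 1) * p) f) ∧
    lambdaNum G h p ≤ lambdaStar G h p ∧
    lambdaStar G h p ≤ h + 2 * (G.maxDegree - 1) * p := by
  classical
  obtain ⟨u0, v0, hd3⟩ := hdiam
  set Δ := G.maxDegree with hΔdef
  set ℓ := h + 2 * (Δ - 1) * p with hℓdef
  set r := u0 with hrdef
  -- Δ ≥ 1
  have hΔ1 : 1 ≤ Δ := by
    obtain ⟨q, -, hql⟩ := hT.isConnected.exists_path_of_dist r v0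
    have hq0 : 0 < q.length := by omega
    have hadj := q.adj_getVert_succ hq0
    rw [SimpleGraph.Walk.getVert_zero] at hadj
    have hdeg : 0 < G.degree u0 := by
      rw [SimpleGraph.degree_pos_iff_exists_adj]
      exact ⟨_, hadj⟩
    have := G.degree_le_maxDegree u0
    omega
  set c := Defs.cV G r Δ with hcdef
  have hclt : ∀ v, c v < Δ := fun v =>
    Props.cV_lt G r hT (fun w => G.degree_le_maxDegree w) hΔ1 v
  set f : V → ℕ := fun v => if G.dist r v % 2 = 0 then p * c v else h + (Δ - 1) * p + p * c v
    with hfdef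
  have key1 : ∀ v, p * c v ≤ (Δ - 1) * p := fun v => by
    have := hclt v
    calc p * c v ≤ p * (Δ - 1) := Nat.mul_le_mul_left _ (by omega)
      _ = (Δ - 1) * p := Nat.mul_comm _ _
  have hf_even : ∀ v, G.dist r v % 2 = 0 → f v = p * c v := fun v hv => if_pos hv
  have hf_odd : ∀ v, G.dist r v % 2 ≠ 0 → f v = h + (Δ - 1) * p + p * c v := fun v hv =>
    if_neg hv
  -- opposite parity blocks give gap at least h
  have hkey : ∀ a b : V, G.dist r a % 2 = 0 → G.dist r b % 2 ≠ 0 →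
      (h : ℤ) ≤ (f b : ℤ) - (f a : ℤ) := by
    intro a b ha hb
    rw [hf_even a ha, hf_odd b hb]
    have h1 := key1 a
    generalize hG : (Δ - 1) * p = Z at h1 ⊢
    generalize p * c a = x at h1 ⊢
    generalize p * c b = y
    omega
  have hopp : ∀ u v : V, G.dist r u % 2 ≠ G.dist r v % 2 → (h : ℤ) ≤ |(f u : ℤ) - (f v : ℤ)| := by
    intro u v hne
    rcases Nat.mod_two_eq_zero_or_one (G.dist r u) with hu | hu
    · have hv : G.dist r v % 2 ≠ 0 := by omega
      have := hkey u v hu hv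
      rw [abs_sub_comm]
      exact this.trans (le_abs_self _)
    · have hv : G.dist r v % 2 = 0 := by omega
      have := hkey v u hv (by omega)
      exact this.trans (le_abs_self _)
  -- same block, distinct colours give gap at least p
  have habs : ∀ a b : ℕ, a ≠ b → (p : ℤ) ≤ |((p * a : ℕ) : ℤ) - ((p * b : ℕ) : ℤ)| := by
    intro a b hab
    rcases Nat.lt_or_ge a b with hlt | hge
    · have hn : p * a + p ≤ p * b := by
        calc p * a + p = p * (a + 1) := by ring
          _ ≤ p * b := Nat.mul_le_mul_left _ (by omega)
      have hz : ((p * a : ℕ) : ℤ) + p ≤ ((p * b : ℕ) : ℤ) := by exact_mod_cast hn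
      rw [abs_sub_comm]
      refine le_trans ?_ (le_abs_self _)
      omega
    · have hlt : b < a := by omega
      have hn : p * b + p ≤ p * a := by
        calc p * b + p = p * (b + 1) := by ring
          _ ≤ p * a := Nat.mul_le_mul_left _ (by omega)
      have hz : ((p * b : ℕ) : ℤ) + p ≤ ((p * a : ℕ) : ℤ) := by exact_mod_cast hn
      refine le_trans ?_ (le_abs_self _)
      omega
  have hsame : ∀ u v : V, G.dist u v = 2 → (p : ℤ) ≤ |(f u : ℤ) - (f v : ℤ)| := by
    intro u v h2
    obtain ⟨w, hwu, hwv⟩ := Props.common_mid G hT h2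
    have hne : u ≠ v := by
      intro e; subst e
      rw [SimpleGraph.dist_self] at h2
      omega
    have hcne : c u ≠ c v := Props.cV_ne G r hT hwu hwv hne
    have hpar0 := Props.dist_parity G r hT u v
    rw [h2] at hpar0
    have hpar : G.dist r u % 2 = G.dist r v % 2 := by omega
    rcases Nat.mod_two_eq_zero_or_one (G.dist r u) with hu | hu
    · rw [hf_even u hu, hf_even v (by omega)]
      exact habs _ _ hcne
    · rw [hf_odd u (by omega), hf_odd v (by omega)]
      have := habs _ _ hcne
      calc (p : ℤ) ≤ |((p * c u : ℕ) : ℤ) - ((p * c v : ℕ) : ℤ)| := this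
        _ = |((h + (Δ - 1) * p + p * c u : ℕ) : ℤ) - ((h + (Δ - 1) * p + p * c v : ℕ) : ℤ)| := by
            congr 1
            push_cast
            ring
  -- the labelling is an L(h,p,p)-labelling
  have hL : IsLLabelling G h p ℓ f := by
    refine ⟨?_, ?_, ?_⟩
    · intro v
      have hk := key1 v
      have hr2 : ℓ = h + ((Δ - 1) * p + (Δ - 1) * p) := by rw [hℓdef]; ring
      by_cases hv : G.dist r v % 2 = 0
      · rw [hf_even v hv]
        generalize hG : (Δ - 1) * p = Z at hk hr2
        generalize p * c v = x at hk ⊢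
        omega
      · rw [hf_odd v hv]
        generalize hG : (Δ - 1) * p = Z at hk hr2 ⊢
        generalize p * c v = x at hk ⊢
        omega
    · intro u v h1
      have hpar0 := Props.dist_parity G r hT u v
      rw [h1] at hpar0
      exact hopp u v (by omega)
    · intro u v h23
      rcases h23 with h2 | h3
      · exact hsame u v h2
      · have hpar0 := Props.dist_parity G r hT u v
        rw [h3] at hpar0
        have := hopp u v (by omega)
        have hph' : (p : ℤ) ≤ (h : ℤ) := by exact_mod_cast hph
        omega
  -- the circular intervals
  have hp1 : 1 ≤ h := le_trans hp hph
  set Slow : Set (ZMod (ℓ + 1)) :=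
    {x : ZMod (ℓ + 1) | ∃ i : ℕ, i ≤ (Δ - 1) * p ∧ x = (0 : ZMod (ℓ + 1)) + (i : ZMod (ℓ + 1))}
    with hSlowdef
  set Shigh : Set (ZMod (ℓ + 1)) :=
    {x : ZMod (ℓ + 1) | ∃ i : ℕ, i ≤ (Δ - 1) * p ∧
      x = ((h + (Δ - 1) * p : ℕ) : ZMod (ℓ + 1)) + (i : ZMod (ℓ + 1))} with hShighdef
  set I : V → Set (ZMod (ℓ + 1)) := fun u => if G.dist r u % 2 = 0 then Shigh else Slow
    with hIdef
  have hbound : (Δ - 1) * p + ((Δ - 1) * p + h) = ℓ := by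
    rw [hℓdef]; ring
  have hdisj : Slow ∩ Shigh = ∅ := by
    apply Set.eq_empty_iff_forall_notMem.mpr
    rintro x ⟨hx1, hx2⟩
    obtain ⟨i, hi, rfl⟩ := hx1
    obtain ⟨j, hj, hx⟩ := hx2
    rw [zero_add] at hx
    have hcast : ((i : ℕ) : ZMod (ℓ + 1)) = ((h + (Δ - 1) * p + j : ℕ) : ZMod (ℓ + 1)) := by
      rw [hx]; push_cast; ring
    have hval := congrArg ZMod.val hcast
    generalize hG : (Δ - 1) * p = Z at hi hj hval hbound
    have hilt : i < ℓ + 1 := by omega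
    have hjlt : h + Z + j < ℓ + 1 := by omega
    rw [ZMod.val_cast_of_lt hilt, ZMod.val_cast_of_lt hjlt] at hval
    omega
  have hel : IsElegantLLabelling G h p ℓ f := by
    refine ⟨hL, I, ?_, ?_, ?_⟩
    · intro u
      simp only [hIdef]
      by_cases hu : G.dist r u % 2 = 0
      · rw [if_pos hu]
        exact ⟨_, (Δ - 1) * p, rfl⟩
      · rw [if_neg hu]
        exact ⟨_, (Δ - 1) * p, rfl⟩
    · intro u w hadj
      have h1 : G.dist u w = 1 := SimpleGraph.dist_eq_one_iff_adj.mpr hadj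
      have hpar0 := Props.dist_parity G r hT u w
      rw [h1] at hpar0
      simp only [hIdef]
      by_cases hu : G.dist r u % 2 = 0
      · rw [if_pos hu]
        have hw : G.dist r w % 2 ≠ 0 := by omega
        refine ⟨p * c w, key1 w, ?_⟩
        rw [hf_odd w hw, Nat.cast_add]
      · rw [if_neg hu]
        have hw : G.dist r w % 2 = 0 := by omega
        refine ⟨p * c w, key1 w, ?_⟩
        rw [hf_even w hw, zero_add]
    · intro u v hadj
      have h1 : G.dist u v = 1 := SimpleGraph.dist_eq_one_iff_adj.mpr hadj
      have hpar0 := Props.dist_parity G r hT u v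
      rw [h1] at hpar0
      simp only [hIdef]
      by_cases hu : G.dist r u % 2 = 0
      · rw [if_pos hu, if_neg (by omega : ¬ G.dist r v % 2 = 0)]
        rw [Set.inter_comm]
        exact hdisj
      · rw [if_neg hu, if_pos (by omega : G.dist r v % 2 = 0)]
        exact hdisj
  refine ⟨⟨f, hel⟩, ?_, ?_⟩
  · have hne : {ℓ' : ℕ | ∃ g : V → ℕ, IsElegantLLabelling G h p ℓ' g}.Nonempty := ⟨ℓ, f, hel⟩
    have hmem := Nat.sInf_mem hne
    obtain ⟨g, hg⟩ := hmem
    exact Nat.sInf_le ⟨g, hg.1⟩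
  · exact Nat.sInf_le ⟨f, hel⟩
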